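/- arXiv:1412.5824 — 4 statements merged into one kernel-verified Lean document; each statement's English description precedes it below -/
import Mathlib

section
/- Let l > 0 and let Ā_l = {z ∈ ℂ : e^{-l} ≤ |z| ≤ 1} be the closed round annulus. Let γ(t) = c + r·exp(i·((1-t)θ₀ + t·θ₁)), t ∈ [0,1], be a circle arc with c ∈ ℂ, r > 0, θ₀, θ₁ ∈ ℝ, |θ₁ - θ₀| ≤ 2π, such that γ(t) ∈ Ā_l for all t ∈ [0,1], |γ(0)| = e^{-l} and |γ(1)| = 1 (the arc joins the inner boundary circle to the outer boundary circle). Then for every argument lift φ of γ, i.e. every continuous φ : [0,1] → ℝ with γ(t) = |γ(t)|·exp(i·φ(t)) for all t, one has |φ(1) - φ(0)| ≤ π. (In the paper's terms: the winding number of a circle arc joining the two boundary components of a Möbius annulus satisfies |w(α)| ≤ 1/2.) -/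
open Set
open Real

/-- The circle arc `t ↦ c + r·exp(i((1-t)θ₀ + tθ₁))`. -/
noncomputable def circleArc (c : ℂ) (r θ₀ θ₁ : ℝ) (t : ℝ) : ℂ :=
  c + (r : ℂ) * Complex.exp (Complex.I * (((1 - t) * θ₀ + t * θ₁ : ℝ) : ℂ))

/-- `φ` is a continuous argument lift of the path `γ` on `[0,1]`. -/
def IsArgLift (γ : ℝ → ℂ) (φ : ℝ → ℝ) : Prop :=
  ContinuousOn φ (Set.Icc 0 1) ∧
  ∀ t ∈ Set.Icc (0 : ℝ) 1,
    γ t = ((‖γ t‖ : ℝ) : ℂ) * Complex.exp (Complex.I * (φ t : ℂ))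

private lemma gap_core (a : ℝ) (g : ℝ → ℝ)
    (h : ∀ t ∈ Icc (0:ℝ) 1, ∃ k : ℤ, g t ∈ Icc (a + 2*π*k) (a + 2*π*k + π))
    (s t : ℝ) (hs : s ∈ Icc (0:ℝ) 1) (ht : t ∈ Icc (0:ℝ) 1)
    (hiv : Icc (g s) (g t) ⊆ g '' Icc 0 1) :
    g t - g s ≤ π := by
  have hπ := Real.pi_pos
  by_contra hc
  push_neg at hc
  obtain ⟨k0, hk0⟩ := h s hs
  obtain ⟨k1, hk1⟩ := h t ht
  have h1 : a + 2*π*k0 + π < g t := by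
    have := hk0.1; linarith
  have hk01 : (k0:ℝ) < k1 := by
    have := hk1.2; nlinarith
  have hk01' : (k0:ℝ) + 1 ≤ k1 := by exact_mod_cast Int.add_one_le_of_lt (by exact_mod_cast hk01)
  have hgt : a + 2*π*k0 + 2*π ≤ g t := by
    have := hk1.1; nlinarith
  have hvs : g s < a + 2*π*k0 + π + π/2 := by have := hk0.2; linarith
  have hvt : a + 2*π*k0 + π + π/2 < g t := by linarith
  obtain ⟨u, hu, hgu⟩ := hiv ⟨le_of_lt hvs, le_of_lt hvt⟩
  obtain ⟨k, hk⟩ := h u hu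
  rw [hgu] at hk
  have hA : (2:ℝ)*k < 2*k0 + 2 := by have := hk.1; nlinarith
  have hB : (2:ℝ)*k0 < 2*k := by have := hk.2; nlinarith
  have hA' : (2:ℤ)*k < 2*k0 + 2 := by exact_mod_cast (by push_cast; linarith : ((2*k:ℤ):ℝ) < ((2*k0+2:ℤ):ℝ))
  have hB' : (2:ℤ)*k0 < 2*k := by exact_mod_cast (by push_cast; linarith : ((2*k0:ℤ):ℝ) < ((2*k:ℤ):ℝ))
  omega

private lemma gap_lemma (a : ℝ) (g : ℝ → ℝ) (hg : ContinuousOn g (Icc 0 1))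
    (h : ∀ t ∈ Icc (0:ℝ) 1, ∃ k : ℤ, g t ∈ Icc (a + 2*π*k) (a + 2*π*k + π)) :
    |g 1 - g 0| ≤ π := by
  have h01 : (0:ℝ) ≤ 1 := zero_le_one
  have e0 : (0:ℝ) ∈ Icc (0:ℝ) 1 := by constructor <;> norm_num
  have e1 : (1:ℝ) ∈ Icc (0:ℝ) 1 := by constructor <;> norm_num
  rw [abs_sub_le_iff]
  constructor
  · exact gap_core a g h 0 1 e0 e1 (intermediate_value_Icc h01 hg)
  · exact gap_core a g h 1 0 e1 e0 (intermediate_value_Icc' h01 hg)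

private lemma sin_nonpos_mem (x : ℝ) (h : Real.sin x ≤ 0) :
    ∃ k : ℤ, x ∈ Icc (-π + 2*π*k) (-π + 2*π*k + π) := by
  have hπ := Real.pi_pos
  have h2π : (0:ℝ) < 2*π := by linarith
  set k : ℤ := round (x / (2*π)) with hk
  have hb : |x / (2*π) - k| ≤ 1/2 := abs_sub_round _
  rw [abs_le] at hb
  have hl : -π ≤ x - 2*π*k := by
    have := mul_le_mul_of_nonneg_right hb.1 h2π.le
    rw [sub_mul, div_mul_cancel₀ x h2π.ne'] at this
    linarith
  have hu : x - 2*π*k ≤ π := by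
    have := mul_le_mul_of_nonneg_right hb.2 h2π.le
    rw [sub_mul, div_mul_cancel₀ x h2π.ne'] at this
    linarith
  have hsy : Real.sin (x - 2*π*k) ≤ 0 := by
    have h2 : x - 2*π*k = x + ((-k : ℤ) : ℝ) * (2*π) := by push_cast; ring
    rw [h2, Real.sin_add_int_mul_two_pi]
    exact h
  rcases eq_or_lt_of_le hu with heq | hlt
  · refine ⟨k+1, ?_, ?_⟩ <;> push_cast <;> linarith
  · have hy0 : x - 2*π*k ≤ 0 := by
      by_contra hpos
      push_neg at hpos
      exact absurd hsy (not_le.mpr (Real.sin_pos_of_pos_of_lt_pi hpos hlt))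
    exact ⟨k, by constructor <;> linarith⟩

private lemma sin_nonneg_mem (x : ℝ) (h : 0 ≤ Real.sin x) :
    ∃ k : ℤ, x ∈ Icc (0 + 2*π*k) (0 + 2*π*k + π) := by
  obtain ⟨k, hk⟩ := sin_nonpos_mem (-x) (by rw [Real.sin_neg]; linarith)
  refine ⟨-k, ?_, ?_⟩ <;> push_cast <;> [skip; skip] <;>
    [ (have := hk.2; linarith) ; (have := hk.1; linarith) ]

private lemma sin_nonpos_arc (u0 d : ℝ) (hd : 0 < d) (hd2 : d ≤ 2*π)
    (hmin : ∀ t ∈ Icc (0:ℝ) 1, Real.cos u0 ≤ Real.cos (u0 + t*d))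
    (hmax : ∀ t ∈ Icc (0:ℝ) 1, Real.cos (u0 + t*d) ≤ Real.cos (u0 + d))
    (hlt : Real.cos u0 < Real.cos (u0 + d)) :
    ∀ t ∈ Icc (0:ℝ) 1, Real.sin (u0 + t*d) ≤ 0 := by
  have hπ := Real.pi_pos
  have h2π : (0:ℝ) < 2*π := by linarith
  intro t ht
  by_contra hpos
  push_neg at hpos
  -- x := u0 + t*d; find k with x - 2πk ∈ (0, π)
  set x := u0 + t*d with hx
  set k : ℤ := ⌊x / (2*π)⌋ with hk
  have hfl : (k:ℝ) ≤ x/(2*π) := Int.floor_le _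
  have hfu : x/(2*π) < k + 1 := Int.lt_floor_add_one _
  have hl : 2*π*k ≤ x := by
    have := mul_le_mul_of_nonneg_right hfl h2π.le
    rw [div_mul_cancel₀ x h2π.ne'] at this
    linarith [this]
  have hu : x < 2*π*k + 2*π := by
    have := mul_lt_mul_of_pos_right hfu h2π
    rw [div_mul_cancel₀ x h2π.ne'] at this
    linarith [this]
  -- sin periodicity
  have hsy : 0 < Real.sin (x - 2*π*k) := by
    have h2 : x - 2*π*k = x + ((-k : ℤ) : ℝ) * (2*π) := by push_cast; ring
    rw [h2, Real.sin_add_int_mul_two_pi]; exact hpos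
  have hyπ : x - 2*π*k < π := by
    by_contra hge
    push_neg at hge
    have h1 : x - 2*π*k - π < π := by linarith
    have h0 : 0 ≤ x - 2*π*k - π := by linarith
    have : 0 ≤ Real.sin (x - 2*π*k - π) := Real.sin_nonneg_of_nonneg_of_le_pi h0 h1.le
    have hsub : Real.sin (x - 2*π*k - π) = - Real.sin (x - 2*π*k) := by
      rw [Real.sin_sub, Real.sin_pi, Real.cos_pi]; ring
    linarith [hsub ▸ this]
  have hy0 : 2*π*k < x := by
    rcases eq_or_lt_of_le hl with heq | h; · rw [← heq] at hsy; simp at hsy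
    exact h
  -- now case on u0 vs 2πk
  have hxu0 : u0 ≤ x := by nlinarith [ht.1, ht.2]
  have hxu1 : x ≤ u0 + d := by nlinarith [ht.1, ht.2]
  rcases le_or_gt (2*π*k) u0 with hcase | hcase
  · rcases le_or_gt (2*π*k + π) (u0 + d) with hend | hend
    · -- there is s with u0 + s*d = 2πk + π
      have hnum0 : 0 ≤ 2*π*k + π - u0 := by linarith
      have hnum1 : 2*π*k + π - u0 ≤ d := by linarith
      have hs : (2*π*k + π - u0)/d ∈ Icc (0:ℝ) 1 := by
        constructor
        · positivity
        · rw [div_le_one hd]; linarith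
      have := hmin _ hs
      rw [show u0 + (2*π*k + π - u0)/d * d = 2*π*k + π by field_simp; ring] at this
      have hcpi : Real.cos (2*π*k + π) = -1 := by
        have : (2*π*(k:ℝ) + π) = π + (k:ℝ)*(2*π) := by ring
        rw [this, Real.cos_add_int_mul_two_pi, Real.cos_pi]
      rw [hcpi] at this
      -- cos u0 ≤ -1 but u0 - 2πk ∈ [0, π)
      have hu0x : u0 < 2*π*k + π := by linarith
      have hcu0 : Real.cos u0 = Real.cos (u0 - 2*π*k) := by
        rw [show u0 - 2*π*k = u0 + ((-k:ℤ):ℝ)*(2*π) by push_cast; ring,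
          Real.cos_add_int_mul_two_pi]
      have : Real.cos π < Real.cos (u0 - 2*π*k) := by
        apply Real.strictAntiOn_cos ⟨by linarith, by linarith⟩ ⟨by linarith, le_refl π⟩
        linarith
      rw [Real.cos_pi] at this
      linarith [hcu0 ▸ hmin 0 ⟨le_refl 0, zero_le_one⟩]
    · -- whole range in [2πk, 2πk+π): cos strictly decreasing
      have h1' : Real.cos (u0 + d - 2*π*k) < Real.cos (u0 - 2*π*k) := by
        apply Real.strictAntiOn_cos ⟨by linarith, by linarith⟩ ⟨by linarith, by linarith⟩
        linarith
      have e1 : Real.cos (u0 - 2*π*k) = Real.cos u0 := by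
        rw [show u0 - 2*π*k = u0 + ((-k:ℤ):ℝ)*(2*π) by push_cast; ring,
          Real.cos_add_int_mul_two_pi]
      have e2 : Real.cos (u0 + d - 2*π*k) = Real.cos (u0 + d) := by
        rw [show u0 + d - 2*π*k = (u0+d) + ((-k:ℤ):ℝ)*(2*π) by push_cast; ring,
          Real.cos_add_int_mul_two_pi]
      rw [e1, e2] at h1'
      linarith
  · -- u0 < 2πk : there is s with u0 + s*d = 2πk, cos = 1 forces cos(u0+d)=1
    have hnum1 : 2*π*k - u0 ≤ d := by linarith
    have hs : (2*π*k - u0)/d ∈ Icc (0:ℝ) 1 := by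
      constructor
      · apply div_nonneg _ hd.le; linarith
      · rw [div_le_one hd]; linarith
    have := hmax _ hs
    rw [show u0 + (2*π*k - u0)/d * d = 2*π*k by field_simp; ring] at this
    have hck : Real.cos (2*π*(k:ℝ)) = 1 := by
      rw [show 2*π*(k:ℝ) = 0 + (k:ℝ)*(2*π) by ring]
      rw [show ((k:ℝ)) = ((k:ℤ):ℝ) by norm_num]
      rw [Real.cos_add_int_mul_two_pi, Real.cos_zero]
    rw [hck] at this
    have hone : Real.cos (u0 + d) = 1 := le_antisymm (Real.cos_le_one _) this
    obtain ⟨m, hm⟩ := (Real.cos_eq_one_iff _).mp hone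
    -- u0 + d ∈ (2πk, 2πk + 2π)
    have hlow : 2*π*(k:ℝ) < u0 + d := by linarith
    have hhigh : u0 + d < 2*π*(k:ℝ) + 2*π := by linarith
    rw [← hm] at hlow hhigh
    have : (k:ℝ) < m := by nlinarith
    have : (m:ℝ) < k + 1 := by nlinarith
    have hk1 : k < m := by exact_mod_cast ‹(k:ℝ) < m›
    have hk2 : m < k + 1 := by exact_mod_cast ‹(m:ℝ) < (k:ℝ) + 1›
    omega

private lemma circleArc_re (c : ℂ) (r θ₀ θ₁ t : ℝ) :
    (circleArc c r θ₀ θ₁ t).re = c.re + r * Real.cos ((1 - t) * θ₀ + t * θ₁) := by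
  unfold circleArc
  rw [mul_comm Complex.I, Complex.add_re, Complex.re_ofReal_mul, Complex.exp_ofReal_mul_I_re]

private lemma circleArc_im (c : ℂ) (r θ₀ θ₁ t : ℝ) :
    (circleArc c r θ₀ θ₁ t).im = c.im + r * Real.sin ((1 - t) * θ₀ + t * θ₁) := by
  unfold circleArc
  rw [mul_comm Complex.I, Complex.add_im, Complex.im_ofReal_mul, Complex.exp_ofReal_mul_I_im]

/-- A circle arc in the closed annulus `{e^{-l} ≤ |z| ≤ 1}` joining the inner
boundary circle to the outer boundary circle has winding number at most `1/2`:
any argument lift `φ` satisfies `|φ(1) - φ(0)| ≤ π`. -/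
theorem circleArc_winding_le_pi (l : ℝ) (hl : 0 < l) (c : ℂ) (r θ₀ θ₁ : ℝ)
    (hr : 0 < r) (hθ : |θ₁ - θ₀| ≤ 2 * Real.pi)
    (hmem : ∀ t ∈ Set.Icc (0 : ℝ) 1,
      Real.exp (-l) ≤ ‖circleArc c r θ₀ θ₁ t‖ ∧
      ‖circleArc c r θ₀ θ₁ t‖ ≤ 1)
    (h0 : ‖circleArc c r θ₀ θ₁ 0‖ = Real.exp (-l))
    (h1 : ‖circleArc c r θ₀ θ₁ 1‖ = 1)
    (φ : ℝ → ℝ) (hφ : IsArgLift (circleArc c r θ₀ θ₁) φ) :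
    |φ 1 - φ 0| ≤ Real.pi := by
  have hπ := Real.pi_pos
  have hexpl : Real.exp (-l) < 1 := by
    have : Real.exp (-l) < Real.exp 0 := Real.exp_lt_exp.mpr (by linarith)
    rwa [Real.exp_zero] at this
  -- the center cannot be 0
  rcases eq_or_ne c 0 with rfl | hc
  · exfalso
    have habs : ∀ t : ℝ, ‖circleArc 0 r θ₀ θ₁ t‖ = r := by
      intro t
      unfold circleArc
      rw [zero_add, norm_mul, mul_comm Complex.I, Complex.norm_exp_ofReal_mul_I,
        Complex.norm_real, Real.norm_eq_abs, abs_of_pos hr, mul_one]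
    rw [habs] at h0 h1
    rw [h1] at h0
    linarith
  set R := ‖c‖ with hRdef
  have hR : 0 < R := norm_pos_iff.mpr hc
  set α := Complex.arg c with hαdef
  have hcre : R * Real.cos α = c.re := by
    rw [hαdef, Complex.cos_arg hc]; field_simp; rw [hRdef]; ring
  have hcim : R * Real.sin α = c.im := by
    rw [hαdef, Complex.sin_arg]; field_simp; rw [hRdef]; ring
  -- squared modulus identity
  have hA : ∀ t : ℝ, (‖circleArc c r θ₀ θ₁ t‖)^2
      = R^2 + r^2 + 2*(r*R)*Real.cos ((1 - t) * θ₀ + t * θ₁ - α) := by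
    intro t
    rw [Complex.sq_norm, Complex.normSq_apply, circleArc_re, circleArc_im, Real.cos_sub,
      ← hcre, ← hcim]
    linear_combination (R^2) * Real.sin_sq_add_cos_sq α
      + (r^2) * Real.sin_sq_add_cos_sq ((1 - t) * θ₀ + t * θ₁)
  have h2rR : (0:ℝ) < 2*(r*R) := by positivity
  -- cosine extremal inequalities
  have cosmin : ∀ t ∈ Icc (0:ℝ) 1,
      Real.cos ((1 - (0:ℝ)) * θ₀ + 0 * θ₁ - α) ≤ Real.cos ((1 - t) * θ₀ + t * θ₁ - α) := by
    intro t ht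
    have e0 := hA 0
    have et := hA t
    have hle : (‖circleArc c r θ₀ θ₁ 0‖)^2 ≤ (‖circleArc c r θ₀ θ₁ t‖)^2 := by
      rw [h0]
      have := (hmem t ht).1
      nlinarith [Real.exp_nonneg (-l)]
    rw [e0, et] at hle
    nlinarith
  have cosmax : ∀ t ∈ Icc (0:ℝ) 1,
      Real.cos ((1 - t) * θ₀ + t * θ₁ - α) ≤ Real.cos ((1 - (1:ℝ)) * θ₀ + 1 * θ₁ - α) := by
    intro t ht
    have e1 := hA 1
    have et := hA t
    have hle : (‖circleArc c r θ₀ θ₁ t‖)^2 ≤ (‖circleArc c r θ₀ θ₁ 1‖)^2 := by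
      rw [h1]
      have := (hmem t ht).2
      nlinarith [norm_nonneg (circleArc c r θ₀ θ₁ t)]
    rw [e1, et] at hle
    nlinarith
  have coslt : Real.cos ((1 - (0:ℝ)) * θ₀ + 0 * θ₁ - α)
      < Real.cos ((1 - (1:ℝ)) * θ₀ + 1 * θ₁ - α) := by
    have e0 := hA 0
    have e1 := hA 1
    have hlt : (‖circleArc c r θ₀ θ₁ 0‖)^2 < (‖circleArc c r θ₀ θ₁ 1‖)^2 := by
      rw [h0, h1]
      nlinarith [Real.exp_nonneg (-l)]
    rw [e0, e1] at hlt
    nlinarith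
  -- components of the lift, and the sign-transfer identity
  have transfer : ∀ t ∈ Icc (0:ℝ) 1,
      ‖circleArc c r θ₀ θ₁ t‖ * R * Real.sin (φ t - α)
        = r * R * Real.sin ((1 - t) * θ₀ + t * θ₁ - α) := by
    intro t ht
    have hlift := hφ.2 t ht
    have hre := congrArg Complex.re hlift
    have him := congrArg Complex.im hlift
    rw [mul_comm Complex.I, Complex.re_ofReal_mul, Complex.exp_ofReal_mul_I_re] at hre
    rw [mul_comm Complex.I, Complex.im_ofReal_mul, Complex.exp_ofReal_mul_I_im] at him
    have hre2 : ‖circleArc c r θ₀ θ₁ t‖ * Real.cos (φ t)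
        = R * Real.cos α + r * Real.cos ((1 - t) * θ₀ + t * θ₁) := by
      rw [← hre, circleArc_re, hcre]
    have him2 : ‖circleArc c r θ₀ θ₁ t‖ * Real.sin (φ t)
        = R * Real.sin α + r * Real.sin ((1 - t) * θ₀ + t * θ₁) := by
      rw [← him, circleArc_im, hcim]
    rw [Real.sin_sub, Real.sin_sub]
    linear_combination (R * Real.cos α) * him2 - (R * Real.sin α) * hre2
  have habspos : ∀ t ∈ Icc (0:ℝ) 1, 0 < ‖circleArc c r θ₀ θ₁ t‖ :=
    fun t ht => lt_of_lt_of_le (Real.exp_pos _) (hmem t ht).1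
  -- trichotomy on the direction of the parametrisation
  rcases lt_trichotomy θ₁ θ₀ with hdir | hdir | hdir
  · -- θ₁ < θ₀ : sin ((1-t)θ₀+tθ₁ - α) ≥ 0 on the arc
    have hd : 0 < θ₀ - θ₁ := by linarith
    have hd2 : θ₀ - θ₁ ≤ 2*π := by
      rw [abs_le] at hθ; linarith [hθ.1]
    have harc := sin_nonpos_arc (α - θ₀) (θ₀ - θ₁) hd hd2 ?_ ?_ ?_
    · -- transfer to φ and conclude
      have hsinφ : ∀ t ∈ Icc (0:ℝ) 1, 0 ≤ Real.sin (φ t - α) := by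
        intro t ht
        have := harc t ht
        rw [show (α - θ₀) + t*(θ₀-θ₁) = -((1 - t) * θ₀ + t * θ₁ - α) by ring,
          Real.sin_neg] at this
        have hΘ : 0 ≤ Real.sin ((1 - t) * θ₀ + t * θ₁ - α) := by linarith
        have hT := transfer t ht
        nlinarith [habspos t ht, mul_pos hr hR, mul_pos (habspos t ht) hR]
      have hgap := gap_lemma 0 (fun t => φ t - α) (hφ.1.sub continuousOn_const)
        (fun t ht => sin_nonneg_mem _ (hsinφ t ht))
      simpa [sub_sub_sub_cancel_right] using hgap
    · intro t ht
      have := cosmin t ht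
      rw [show ((1 - (0:ℝ)) * θ₀ + 0 * θ₁ - α) = -(α - θ₀) by ring,
        show ((1 - t) * θ₀ + t * θ₁ - α) = -((α - θ₀) + t*(θ₀-θ₁)) by ring,
        Real.cos_neg, Real.cos_neg] at this
      exact this
    · intro t ht
      have := cosmax t ht
      rw [show ((1 - (1:ℝ)) * θ₀ + 1 * θ₁ - α) = -((α - θ₀) + (θ₀-θ₁)) by ring,
        show ((1 - t) * θ₀ + t * θ₁ - α) = -((α - θ₀) + t*(θ₀-θ₁)) by ring,
        Real.cos_neg, Real.cos_neg] at this
      exact this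
    · have := coslt
      rw [show ((1 - (0:ℝ)) * θ₀ + 0 * θ₁ - α) = -(α - θ₀) by ring,
        show ((1 - (1:ℝ)) * θ₀ + 1 * θ₁ - α) = -((α - θ₀) + (θ₀-θ₁)) by ring,
        Real.cos_neg, Real.cos_neg] at this
      exact this
  · -- θ₁ = θ₀ : impossible
    exfalso
    have : ((1 - (0:ℝ)) * θ₀ + 0 * θ₁ - α) = ((1 - (1:ℝ)) * θ₀ + 1 * θ₁ - α) := by
      rw [hdir]; ring
    rw [this] at coslt
    exact lt_irrefl _ coslt
  · -- θ₀ < θ₁ : sin ((1-t)θ₀+tθ₁ - α) ≤ 0 on the arc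
    have hd : 0 < θ₁ - θ₀ := by linarith
    have hd2 : θ₁ - θ₀ ≤ 2*π := by
      rw [abs_le] at hθ; linarith [hθ.2]
    have harc := sin_nonpos_arc (θ₀ - α) (θ₁ - θ₀) hd hd2 ?_ ?_ ?_
    · have hsinφ : ∀ t ∈ Icc (0:ℝ) 1, Real.sin (φ t - α) ≤ 0 := by
        intro t ht
        have := harc t ht
        rw [show (θ₀ - α) + t*(θ₁-θ₀) = ((1 - t) * θ₀ + t * θ₁ - α) by ring] at this
        have hT := transfer t ht
        nlinarith [habspos t ht, mul_pos hr hR, mul_pos (habspos t ht) hR]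
      have hgap := gap_lemma (-π) (fun t => φ t - α) (hφ.1.sub continuousOn_const)
        (fun t ht => sin_nonpos_mem _ (hsinφ t ht))
      simpa [sub_sub_sub_cancel_right] using hgap
    · intro t ht
      have := cosmin t ht
      rw [show ((1 - (0:ℝ)) * θ₀ + 0 * θ₁ - α) = θ₀ - α by ring,
        show ((1 - t) * θ₀ + t * θ₁ - α) = (θ₀ - α) + t*(θ₁-θ₀) by ring] at this
      exact this
    · intro t ht
      have := cosmax t ht
      rw [show ((1 - (1:ℝ)) * θ₀ + 1 * θ₁ - α) = (θ₀ - α) + (θ₁-θ₀) by ring,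
        show ((1 - t) * θ₀ + t * θ₁ - α) = (θ₀ - α) + t*(θ₁-θ₀) by ring] at this
      exact this
    · have := coslt
      rw [show ((1 - (0:ℝ)) * θ₀ + 0 * θ₁ - α) = θ₀ - α by ring,
        show ((1 - (1:ℝ)) * θ₀ + 1 * θ₁ - α) = (θ₀ - α) + (θ₁-θ₀) by ring] at this
      exact this
end

section
/- Let l > 0 and let Ā_l = {z ∈ ℂ : e^{-l} ≤ |z| ≤ 1}. Then every point of the inner boundary circle can be joined to every point of the outer boundary circle by a circle arc lying in Ā_l: for all x, y ∈ ℂ with |x| = e^{-l} and |y| = 1, there exist c ∈ ℂ, r > 0 and θ₀, θ₁ ∈ ℝ with |θ₁ - θ₀| ≤ 2π such that the circle arc γ(t) = c + r·exp(i·((1-t)θ₀ + t·θ₁)) satisfies γ(0) = x, γ(1) = y, and e^{-l} ≤ |γ(t)| ≤ 1 for all t ∈ [0,1]. -/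
set_option maxHeartbeats 1000000 in
/-- Any point of the inner boundary circle of the closed annulus
`{e^{-l} ≤ |z| ≤ 1}` can be joined to any point of the outer boundary circle by
a circle arc lying in the annulus. -/
theorem exists_circleArc_joining (l : ℝ) (hl : 0 < l) (x y : ℂ)
    (hx : ‖x‖ = Real.exp (-l)) (hy : ‖y‖ = 1) :
    ∃ (c : ℂ) (r θ₀ θ₁ : ℝ), 0 < r ∧ |θ₁ - θ₀| ≤ 2 * Real.pi ∧
      circleArc c r θ₀ θ₁ 0 = x ∧ circleArc c r θ₀ θ₁ 1 = y ∧
      ∀ t ∈ Set.Icc (0 : ℝ) 1,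
        Real.exp (-l) ≤ ‖circleArc c r θ₀ θ₁ t‖ ∧
        ‖circleArc c r θ₀ θ₁ t‖ ≤ 1 := by
  set a := Real.exp (-l) with ha
  have ha0 : 0 < a := Real.exp_pos _
  have ha1 : a < 1 := by
    rw [ha, Real.exp_lt_one_iff]; linarith
  set s : ℝ := (x * (starRingEnd ℂ) y).re with hs
  have hsle : s ≤ a := by
    have h1 : s ≤ ‖x * (starRingEnd ℂ) y‖ := Complex.re_le_norm _
    have h2 : ‖x * (starRingEnd ℂ) y‖ = a := by
      rw [norm_mul, Complex.norm_conj, hx, hy, mul_one]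
    linarith
  have hs1 : s < 1 := lt_of_le_of_lt hsle ha1
  set r : ℝ := (a ^ 2 + 1 - 2 * s) / (2 * (1 - s)) with hrdef
  have hden : 0 < 2 * (1 - s) := by linarith
  have hnum : 0 < a ^ 2 + 1 - 2 * s := by nlinarith
  have hr0 : 0 < r := div_pos hnum hden
  have hkey : 2 * r * (1 - s) = a ^ 2 + 1 - 2 * s := by
    have h1s : (1 - s) ≠ 0 := by linarith
    rw [hrdef]; field_simp
  have hr1 : r < 1 := by nlinarith
  set c : ℂ := (1 - (r : ℂ)) * y with hc
  have hnsx : Complex.normSq x = a ^ 2 := by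
    rw [← Complex.sq_norm, hx]
  have hnsy : Complex.normSq y = 1 := by
    rw [← Complex.sq_norm, hy]; norm_num
  have hnc : Complex.normSq c = (1 - r) ^ 2 := by
    rw [hc, Complex.normSq_mul, hnsy, mul_one]
    have : (1 - (r : ℂ)) = ((1 - r : ℝ) : ℂ) := by push_cast; ring
    rw [this, Complex.normSq_ofReal]; ring
  have hxcre : (x * (starRingEnd ℂ) c).re = (1 - r) * s := by
    have h1 : x * (starRingEnd ℂ) c = ((1 - r : ℝ) : ℂ) * (x * (starRingEnd ℂ) y) := by
      rw [hc, map_mul]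
      push_cast
      rw [map_sub, map_one, Complex.conj_ofReal]
      ring
    rw [h1, Complex.mul_re, Complex.ofReal_re, Complex.ofReal_im]
    simp [hs]
  have hxc : Complex.normSq (x - c) = r ^ 2 := by
    rw [Complex.normSq_sub, hnsx, hnc, hxcre]
    nlinarith [hkey]
  have habsxc : ‖x - c‖ = r := by
    have := Complex.sq_norm (x - c)
    nlinarith [norm_nonneg (x - c)]
  have hyc : y - c = (r : ℂ) * y := by rw [hc]; ring
  have habsyc : ‖y - c‖ = r := by
    rw [hyc, norm_mul, hy, mul_one, Complex.norm_of_nonneg hr0.le]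
  have hycne : y - c ≠ 0 := by
    rw [hyc]
    apply mul_ne_zero
    · exact_mod_cast hr0.ne'
    · intro h; rw [h] at hy; simp at hy
  set ψ : ℝ := Complex.arg y with hψ
  set δ : ℝ := Complex.arg ((x - c) / (y - c)) with hδ
  have hyexp : Complex.exp ((ψ : ℂ) * Complex.I) = y := by
    have := Complex.norm_mul_exp_arg_mul_I y
    rw [hy] at this; simpa using this
  have hδexp : Complex.exp ((δ : ℂ) * Complex.I) = (x - c) / (y - c) := by
    have h1 : ‖(x - c) / (y - c)‖ = 1 := by
      rw [norm_div, habsxc, habsyc, div_self hr0.ne']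
    have := Complex.norm_mul_exp_arg_mul_I ((x - c) / (y - c))
    rw [h1] at this; simpa using this
  have hγ : ∀ t : ℝ, circleArc c r (ψ + δ) ψ t
      = c + (r : ℂ) * y * Complex.exp ((((1 - t) * δ : ℝ) : ℂ) * Complex.I) := by
    intro t
    unfold circleArc
    have h1 : ((1 - t) * (ψ + δ) + t * ψ : ℝ) = ψ + (1 - t) * δ := by ring
    rw [h1]
    push_cast
    rw [show Complex.I * ((ψ : ℂ) + (1 - (t : ℂ)) * δ)
        = (ψ : ℂ) * Complex.I + ((1 - (t : ℂ)) * δ) * Complex.I by ring,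
      Complex.exp_add, hyexp]
    ring
  have hns : ∀ u : ℝ, Complex.normSq (c + (r : ℂ) * y * Complex.exp ((u : ℂ) * Complex.I))
      = (1 - r) ^ 2 + r ^ 2 + 2 * r * (1 - r) * Real.cos u := by
    intro u
    have hfac : c + (r : ℂ) * y * Complex.exp ((u : ℂ) * Complex.I)
        = y * (((1 - r : ℝ) : ℂ) + ((r : ℝ) : ℂ) * Complex.exp ((u : ℂ) * Complex.I)) := by
      rw [hc]; push_cast; ring
    rw [hfac, Complex.normSq_mul, hnsy, one_mul, Complex.normSq_apply]
    simp only [Complex.add_re, Complex.add_im, Complex.mul_re, Complex.mul_im,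
      Complex.ofReal_re, Complex.ofReal_im, Complex.exp_ofReal_mul_I_re,
      Complex.exp_ofReal_mul_I_im]
    nlinarith [Real.sin_sq_add_cos_sq u]
  have hγ0 : circleArc c r (ψ + δ) ψ 0 = x := by
    rw [hγ 0]
    norm_num
    rw [hδexp, hyc]
    have hryne : (r : ℂ) * y ≠ 0 := by
      apply mul_ne_zero
      · exact_mod_cast hr0.ne'
      · intro h; rw [h] at hy; simp at hy
    rw [mul_div_cancel₀ _ hryne]
    ring
  have hγ1 : circleArc c r (ψ + δ) ψ 1 = y := by
    rw [hγ 1]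
    norm_num
    rw [hc]; ring
  -- value of cos δ from |x| = a
  have hcosδ : (1 - r) ^ 2 + r ^ 2 + 2 * r * (1 - r) * Real.cos δ = a ^ 2 := by
    have h1 := hns δ
    have h2 : c + (r : ℂ) * y * Complex.exp ((δ : ℂ) * Complex.I) = x := by
      have := hγ 0
      rw [hγ0] at this
      norm_num at this
      rw [← this]
    rw [h2, hnsx] at h1
    linarith
  have habsδ : |δ| ≤ Real.pi := Complex.abs_arg_le_pi _
  refine ⟨c, r, ψ + δ, ψ, hr0, ?_, hγ0, hγ1, ?_⟩
  · have : ψ - (ψ + δ) = -δ := by ring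
    rw [this, abs_neg]
    have := Real.pi_pos
    linarith
  · intro t ht
    obtain ⟨ht0, ht1⟩ := ht
    have hu := hns ((1 - t) * δ)
    have hcos : Real.cos δ ≤ Real.cos ((1 - t) * δ) := by
      have h1 : |(1 - t) * δ| ≤ |δ| := by
        rw [abs_mul]
        calc |1 - t| * |δ| ≤ 1 * |δ| := by
              apply mul_le_mul_of_nonneg_right _ (abs_nonneg δ)
              rw [abs_le]; constructor <;> linarith
          _ = |δ| := one_mul _
      calc Real.cos δ = Real.cos |δ| := (Real.cos_abs δ).symm
        _ ≤ Real.cos |(1 - t) * δ| :=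
            Real.cos_le_cos_of_nonneg_of_le_pi (abs_nonneg _) habsδ h1
        _ = Real.cos ((1 - t) * δ) := Real.cos_abs _
    have hcos1 : Real.cos ((1 - t) * δ) ≤ 1 := Real.cos_le_one _
    have hposcoef : 0 ≤ 2 * r * (1 - r) := by nlinarith
    have hlo : a ^ 2 ≤ Complex.normSq (circleArc c r (ψ + δ) ψ t) := by
      rw [hγ t, hu]
      nlinarith
    have hhi : Complex.normSq (circleArc c r (ψ + δ) ψ t) ≤ 1 := by
      rw [hγ t, hu]
      nlinarith
    have hnn := norm_nonneg (circleArc c r (ψ + δ) ψ t)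
    have hsq := Complex.sq_norm (circleArc c r (ψ + δ) ψ t)
    constructor
    · nlinarith
    · nlinarith
end

section
/- Let l > 0 and let Ā_l = {z ∈ ℂ : e^{-l} ≤ |z| ≤ 1}. Let x, y ∈ ℂ with |x| = e^{-l} and |y| = 1. Then (x, y) is a singular pair — i.e. there exist c ∈ ℂ and r > 0 with |c| < r such that the circle {z ∈ ℂ : |z - c| = r} is contained in Ā_l and contains both x and y — if and only if y = -e^{l}·x. In particular each point of the inner boundary circle belongs to exactly one singular pair. -/
/-- `(x, y)` is a singular pair on the boundary of the closed annulus
`{e^{-l} ≤ |z| ≤ 1}`: some circle contained in the annulus and enclosing `0`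
passes through both `x` and `y`. -/
def SingularPair (l : ℝ) (x y : ℂ) : Prop :=
  ∃ (c : ℂ) (r : ℝ), ‖c‖ < r ∧
    (∀ z : ℂ, ‖z - c‖ = r →
      Real.exp (-l) ≤ ‖z‖ ∧ ‖z‖ ≤ 1) ∧
    ‖x - c‖ = r ∧ ‖y - c‖ = r

lemma abs_real_smul' (a : ℝ) (c : ℂ) : ‖a • c‖ = |a| * ‖c‖ := by
  rw [norm_smul, Real.norm_eq_abs]

lemma singular_fwd (l : ℝ) (hl : 0 < l) (x y : ℂ)
    (hx : ‖x‖ = Real.exp (-l)) (hy : ‖y‖ = 1)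
    (h : SingularPair l x y) : y = -(Real.exp l : ℂ) * x := by
  obtain ⟨c, r, hcr, hsub, hxc, hyc⟩ := h
  have hexp1 : Real.exp (-l) < 1 := Real.exp_lt_one_iff.mpr (by linarith)
  have hr0 : 0 < r := lt_of_le_of_lt (norm_nonneg c) hcr
  have hc0 : c ≠ 0 := by
    intro h0
    subst h0
    simp only [sub_zero] at hxc hyc
    rw [hx] at hxc; rw [hy] at hyc
    linarith [hxc.trans hyc.symm]
  have hcpos : 0 < ‖c‖ := norm_pos_iff.mpr hc0
  -- point of the circle closest to the origin
  have hclose : Real.exp (-l) ≤ r - ‖c‖ := by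
    have hz := hsub ((1 - r / ‖c‖ : ℝ) • c) ?_
    · have habs : ‖(1 - r / ‖c‖ : ℝ) • c‖
          = r - ‖c‖ := by
        rw [abs_real_smul',
          _root_.abs_of_nonpos (by rw [sub_nonpos, le_div_iff₀ hcpos, one_mul]; exact hcr.le)]
        field_simp
        ring
      rw [habs] at hz
      exact hz.1
    · rw [show ((1 - r / ‖c‖ : ℝ) • c) - c = (-(r / ‖c‖) : ℝ) • c by
        push_cast [Complex.real_smul]; ring]
      rw [abs_real_smul', abs_neg, _root_.abs_of_nonneg (div_nonneg hr0.le hcpos.le)]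
      field_simp
  -- point of the circle farthest from the origin
  have hfar : r + ‖c‖ ≤ 1 := by
    have hz := hsub ((1 + r / ‖c‖ : ℝ) • c) ?_
    · have habs : ‖(1 + r / ‖c‖ : ℝ) • c‖
          = r + ‖c‖ := by
        rw [abs_real_smul', _root_.abs_of_nonneg (by positivity)]
        field_simp
        ring
      rw [habs] at hz
      exact hz.2
    · rw [show ((1 + r / ‖c‖ : ℝ) • c) - c = ((r / ‖c‖) : ℝ) • c by
        push_cast [Complex.real_smul]; ring]
      rw [abs_real_smul', _root_.abs_of_nonneg (div_nonneg hr0.le hcpos.le)]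
      field_simp
  -- equality cases
  have h2x : ‖x - c‖ = ‖x‖ + ‖c‖ := by
    have hle : ‖x - c‖ ≤ ‖x‖ + ‖c‖ := by
      simpa [sub_eq_add_neg] using norm_add_le x (-c)
    have hge : ‖x‖ + ‖c‖ ≤ ‖x - c‖ := by
      rw [hxc, hx]; linarith
    linarith
  have h2y : ‖y‖ = ‖y - c‖ + ‖c‖ := by
    have hle : ‖y‖ ≤ ‖y - c‖ + ‖c‖ := by
      simpa using norm_add_le (y - c) c
    have hge : ‖y - c‖ + ‖c‖ ≤ ‖y‖ := by
      rw [hyc, hy]; linarith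
    linarith
  have hxe : ‖x + (-c)‖ = ‖x‖ + ‖-c‖ := by
    simpa [sub_eq_add_neg] using h2x
  have hye : ‖(y - c) + c‖ = ‖y - c‖ + ‖c‖ := by
    simpa using h2y
  have hray_x : SameRay ℝ x (-c) := sameRay_iff_norm_add.mpr hxe
  have hray_y : SameRay ℝ (y - c) c := sameRay_iff_norm_add.mpr hye
  obtain ⟨t, ht0, hxt⟩ := hray_x.symm.exists_nonneg_left (neg_ne_zero.mpr hc0)
  obtain ⟨s, hs0, hys⟩ := hray_y.symm.exists_nonneg_left hc0
  -- hxt : t • (-c) = x, hys : s • c = y - c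
  have hts : t * ‖c‖ = Real.exp (-l) := by
    rw [← hx, ← hxt, abs_real_smul', norm_neg, _root_.abs_of_nonneg ht0]
  have hyv : y = ((1 + s : ℝ)) • c := by
    rw [add_smul, one_smul, hys]; abel
  have hss : (1 + s) * ‖c‖ = 1 := by
    have h4 := congrArg (‖·‖) hyv
    rw [hy, abs_real_smul', _root_.abs_of_nonneg (by linarith)] at h4
    exact h4.symm
  have hml : Real.exp l * Real.exp (-l) = 1 := by
    rw [← Real.exp_add]; simp
  have hkey : (1 + s) = Real.exp l * t := by
    have h3 : (1 + s) * ‖c‖ = (Real.exp l * t) * ‖c‖ := by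
      rw [hss, mul_assoc, hts, hml]
    exact mul_right_cancel₀ (ne_of_gt hcpos) h3
  rw [hyv, ← hxt, hkey, Complex.real_smul, Complex.real_smul]
  push_cast
  ring

lemma singular_bwd (l : ℝ) (hl : 0 < l) (x : ℂ)
    (hx : ‖x‖ = Real.exp (-l)) :
    SingularPair l x (-(Real.exp l : ℂ) * x) := by
  have hexp1 : Real.exp (-l) < 1 := Real.exp_lt_one_iff.mpr (by linarith)
  have hml : Real.exp l * Real.exp (-l) = 1 := by
    rw [← Real.exp_add]; simp
  have hegt1 : 1 < Real.exp l := by nlinarith [Real.exp_pos l]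
  refine ⟨-((Real.exp l - 1) / 2 : ℝ) * x, (1 + Real.exp (-l)) / 2, ?_, ?_, ?_, ?_⟩
  · rw [norm_mul, norm_neg, Complex.norm_real, Real.norm_eq_abs, hx,
      _root_.abs_of_nonneg (by nlinarith)]
    nlinarith [Real.exp_pos (-l)]
  · intro z hz
    have hcabs : ‖-((Real.exp l - 1) / 2 : ℝ) * x‖ = (1 - Real.exp (-l)) / 2 := by
      rw [norm_mul, norm_neg, Complex.norm_real, Real.norm_eq_abs, hx,
        _root_.abs_of_nonneg (by nlinarith)]
      nlinarith
    constructor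
    · have h1 : ‖z - (-((Real.exp l - 1) / 2 : ℝ) * x)‖
          ≤ ‖z‖ + ‖-((Real.exp l - 1) / 2 : ℝ) * x‖ := by
        simpa [sub_eq_add_neg] using
          norm_add_le z (-(-((Real.exp l - 1) / 2 : ℝ) * x))
      rw [hz, hcabs] at h1
      linarith
    · have h1 := norm_add_le (z - (-((Real.exp l - 1) / 2 : ℝ) * x))
        (-((Real.exp l - 1) / 2 : ℝ) * x)
      simp only [sub_add_cancel] at h1
      rw [hz, hcabs] at h1
      linarith
  · have : x - (-((Real.exp l - 1) / 2 : ℝ) * x) = (((Real.exp l + 1) / 2 : ℝ) : ℂ) * x := by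
      push_cast; ring
    rw [this, norm_mul, Complex.norm_real, Real.norm_eq_abs, hx,
      _root_.abs_of_nonneg (by positivity)]
    nlinarith
  · have : -(Real.exp l : ℂ) * x - (-((Real.exp l - 1) / 2 : ℝ) * x)
        = ((-(Real.exp l + 1) / 2 : ℝ) : ℂ) * x := by
      push_cast; ring
    rw [this, norm_mul, Complex.norm_real, Real.norm_eq_abs, hx,
      abs_div, _root_.abs_of_nonneg (by norm_num : (0:ℝ) ≤ 2),
      abs_neg, _root_.abs_of_nonneg (by positivity)]
    nlinarith

/-- Characterization of singular pairs: `(x, y)` with `|x| = e^{-l}`, `|y| = 1`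
is a singular pair iff `y = -e^l·x`; in particular each point of the inner
boundary circle belongs to exactly one singular pair. -/
theorem singularPair_iff (l : ℝ) (hl : 0 < l) (x y : ℂ)
    (hx : ‖x‖ = Real.exp (-l)) (hy : ‖y‖ = 1) :
    (SingularPair l x y ↔ y = -(Real.exp l : ℂ) * x) ∧
    (∃! y' : ℂ, ‖y'‖ = 1 ∧ SingularPair l x y') := by
  have hml : Real.exp l * Real.exp (-l) = 1 := by
    rw [← Real.exp_add]; simp
  have habs : ‖-(Real.exp l : ℂ) * x‖ = 1 := by
    rw [norm_mul, norm_neg, Complex.norm_real, Real.norm_eq_abs, hx,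
      _root_.abs_of_nonneg (Real.exp_pos l).le, hml]
  constructor
  · constructor
    · exact singular_fwd l hl x y hx hy
    · rintro rfl
      exact singular_bwd l hl x hx
  · refine ⟨-(Real.exp l : ℂ) * x, ⟨habs, singular_bwd l hl x hx⟩, ?_⟩
    rintro y' ⟨hy', hsp⟩
    exact singular_fwd l hl x y' hx hy' hsp
end

section
/- The modulus of a round annulus is a conformal invariant: let l₁, l₂ > 0 and let A_{lⱼ} = {z ∈ ℂ : e^{-lⱼ} < |z| < 1} for j = 1, 2. Suppose f : ℂ → ℂ is holomorphic on the open unit disc 𝔻 = {|z| < 1}, maps 𝔻 bijectively onto 𝔻, and maps A_{l₁} bijectively onto A_{l₂}. Then l₁ = l₂. (Hence for 0 < l₁ < l₂ the annuli A_{l₁} and A_{l₂} are not conformally equivalent by an automorphism of the unit disc, since such an automorphism preserves hyperbolic area.) -/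
open Metric Set Complex

lemma normSq_mobius (r : ℝ) (w z : ℂ) :
    Complex.normSq ((r:ℂ)^2 - (starRingEnd ℂ) w * z) - r^2 * Complex.normSq (z - w)
      = (r^2 - Complex.normSq z) * (r^2 - Complex.normSq w) := by
  simp only [← Complex.ofReal_pow, Complex.normSq_apply, Complex.sub_re, Complex.sub_im,
    Complex.mul_re, Complex.mul_im, Complex.conj_re, Complex.conj_im, Complex.ofReal_re,
    Complex.ofReal_im]
  ring

lemma normSq_mobius' (r : ℝ) (w z : ℂ) :
    Complex.normSq ((r:ℂ) + z * (starRingEnd ℂ) w) - Complex.normSq (z * r + w)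
      = (1 - Complex.normSq z) * (r^2 - Complex.normSq w) := by
  simp only [← Complex.ofReal_pow, Complex.normSq_apply, Complex.add_re, Complex.add_im,
    Complex.mul_re, Complex.mul_im, Complex.conj_re, Complex.conj_im, Complex.ofReal_re,
    Complex.ofReal_im]
  ring

lemma cabs_ofReal (r : ℝ) : ‖(r:ℂ)‖ = |r| := by
  rw [Complex.norm_real, Real.norm_eq_abs]

set_option maxHeartbeats 2000000 in
/-- The modulus of a round annulus is a conformal invariant: a holomorphic
bijection of the unit disc mapping the annulus `{e^{-l₁} < |z| < 1}` bijectively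
onto `{e^{-l₂} < |z| < 1}` forces `l₁ = l₂`. -/
theorem annulus_modulus_conformal_invariant (l₁ l₂ : ℝ)
    (hl₁ : 0 < l₁) (hl₂ : 0 < l₂) (f : ℂ → ℂ)
    (hf : DifferentiableOn ℂ f (Metric.ball 0 1))
    (hdisc : Set.BijOn f (Metric.ball 0 1) (Metric.ball 0 1))
    (hann : Set.BijOn f
      {z : ℂ | Real.exp (-l₁) < ‖z‖ ∧ ‖z‖ < 1}
      {z : ℂ | Real.exp (-l₂) < ‖z‖ ∧ ‖z‖ < 1}) :
    l₁ = l₂ := by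
  set r₁ := Real.exp (-l₁) with hr₁def
  set r₂ := Real.exp (-l₂) with hr₂def
  have hr₁0 : 0 < r₁ := Real.exp_pos _
  have hr₂0 : 0 < r₂ := Real.exp_pos _
  have hr₁1 : r₁ < 1 := by
    rw [hr₁def, ← Real.exp_zero]
    exact Real.exp_lt_exp.mpr (by linarith)
  have hr₂1 : r₂ < 1 := by
    rw [hr₂def, ← Real.exp_zero]
    exact Real.exp_lt_exp.mpr (by linarith)
  suffices hrr : r₁ = r₂ by
    have := Real.exp_injective (hr₁def ▸ hr₂def ▸ hrr)
    linarith
  -- membership rephrasings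
  have hmem : ∀ z : ℂ, z ∈ ball (0:ℂ) 1 ↔ ‖z‖ < 1 := fun z => by
    rw [mem_ball_zero_iff]
  have hmemc : ∀ z : ℂ, ∀ r : ℝ, z ∈ closedBall (0:ℂ) r ↔ ‖z‖ ≤ r := fun z r => by
    rw [mem_closedBall_zero_iff]
  have hsub1 : closedBall (0:ℂ) r₁ ⊆ ball (0:ℂ) 1 := fun z hz => by
    rw [hmemc] at hz; rw [hmem]; linarith
  have hA₁sub : {z : ℂ | r₁ < ‖z‖ ∧ ‖z‖ < 1} ⊆ ball (0:ℂ) 1 :=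
    fun z hz => (hmem z).mpr hz.2
  -- Step 1 : f maps the closed ball r₁ bijectively to closed ball r₂
  have hK : Set.BijOn f (closedBall (0:ℂ) r₁) (closedBall (0:ℂ) r₂) := by
    refine ⟨?_, hdisc.injOn.mono hsub1, ?_⟩
    · intro z hz
      rw [hmemc] at hz ⊢
      have hz1 : z ∈ ball (0:ℂ) 1 := hsub1 ((hmemc z r₁).mpr hz)
      have hfz : f z ∈ ball (0:ℂ) 1 := hdisc.mapsTo hz1
      by_contra hgt
      push_neg at hgt
      have hfzA : f z ∈ {w : ℂ | r₂ < ‖w‖ ∧ ‖w‖ < 1} :=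
        ⟨hgt, (hmem _).mp hfz⟩
      obtain ⟨z', hz', hfz'⟩ := hann.surjOn hfzA
      have : z' = z := hdisc.injOn (hA₁sub hz') hz1 hfz'
      rw [this] at hz'
      exact absurd hz'.1 (not_lt.mpr hz)
    · intro w hw
      rw [hmemc] at hw
      have hw1 : w ∈ ball (0:ℂ) 1 := (hmem w).mpr (by linarith)
      obtain ⟨z, hz, hfz⟩ := hdisc.surjOn hw1
      refine ⟨z, ?_, hfz⟩
      rw [hmemc]
      by_contra hgt
      push_neg at hgt
      have hzA : z ∈ {z : ℂ | r₁ < ‖z‖ ∧ ‖z‖ < 1} := ⟨hgt, (hmem z).mp hz⟩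
      have := (hann.mapsTo hzA).1
      rw [hfz] at this
      exact absurd this (not_lt.mpr hw)
  -- Step 2 : |f z| = r₂ on the circle |z| = r₁
  have hcirc : ∀ z : ℂ, ‖z‖ = r₁ → ‖f z‖ = r₂ := by
    intro z hz
    have hz1 : z ∈ ball (0:ℂ) 1 := (hmem z).mpr (by rw [hz]; exact hr₁1)
    have hle : ‖f z‖ ≤ r₂ :=
      (hmemc _ r₂).mp (hK.mapsTo ((hmemc z r₁).mpr hz.le))
    have hge : r₂ ≤ ‖f z‖ := by
      have hT : Filter.Tendsto (fun t : ℝ => ‖f ((t:ℂ) * z)‖)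
          (nhdsWithin (1:ℝ) (Set.Ioi 1)) (nhds (‖f z‖)) := by
        have hfc : ContinuousAt f z :=
          (hf.differentiableAt (isOpen_ball.mem_nhds hz1)).continuousAt
        have hmulc : Filter.Tendsto (fun t : ℝ => (t:ℂ) * z) (nhds 1) (nhds z) := by
          have hcm : Continuous (fun t : ℝ => (t:ℂ) * z) :=
            Complex.continuous_ofReal.mul continuous_const
          have := hcm.tendsto (1:ℝ)
          simpa using this
        have := ((continuous_norm.tendsto (f z)).comp (hfc.tendsto.comp hmulc))
        exact (by simpa [Function.comp_def] using this : Filter.Tendsto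
          (fun t : ℝ => ‖f ((t:ℂ) * z)‖) (nhds 1)
          (nhds (‖f z‖))).mono_left nhdsWithin_le_nhds
      refine ge_of_tendsto hT ?_
      have h1r : (1:ℝ) < 1 / r₁ := by rw [lt_div_iff₀ hr₁0]; linarith
      filter_upwards [Ioo_mem_nhdsGT_of_mem (Set.mem_Ico.mpr ⟨le_refl (1:ℝ), h1r⟩)] with t ht
      have ht0 : (0:ℝ) < t := by linarith [ht.1]
      have habs : ‖(t:ℂ) * z‖ = t * r₁ := by
        rw [norm_mul, cabs_ofReal, abs_of_pos ht0, hz]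
      have htz : (t:ℂ) * z ∈ {w : ℂ | r₁ < ‖w‖ ∧ ‖w‖ < 1} := by
        constructor
        · rw [habs]; nlinarith [ht.1]
        · rw [habs]; rw [lt_div_iff₀ hr₁0] at h1r
          calc t * r₁ < (1/r₁) * r₁ := by nlinarith [ht.2]
          _ = 1 := by field_simp
      exact le_of_lt (hann.mapsTo htz).1
    linarith
  -- Step 3 : the zero of f
  obtain ⟨w₀, hw₀K, hfw₀⟩ := hK.surjOn ((hmemc (0:ℂ) r₂).mpr (by simpa using hr₂0.le))
  have hw₀lt : ‖w₀‖ < r₁ := by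
    rcases lt_or_eq_of_le ((hmemc w₀ r₁).mp hw₀K) with h | h
    · exact h
    · exfalso
      have := hcirc w₀ h
      rw [hfw₀] at this
      simp at this
      linarith
  have hw₀1 : w₀ ∈ ball (0:ℂ) 1 := hsub1 hw₀K
  -- Step 4 : analytic order of f at w₀
  have hA : AnalyticOnNhd ℂ f (ball (0:ℂ) 1) := hf.analyticOnNhd isOpen_ball
  have hfa : AnalyticAt ℂ f w₀ := hA w₀ hw₀1
  have horder_ne_top : analyticOrderAt f w₀ ≠ ⊤ := by
    intro htop
    rw [analyticOrderAt_eq_top] at htop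
    obtain ⟨ε, hε0, hball⟩ := Metric.eventually_nhds_iff_ball.mp htop
    set δ := min (ε/2) ((r₁ - ‖w₀‖)/2) with hδdef
    have hδ0 : 0 < δ := lt_min (by linarith) (by linarith)
    set z := w₀ + (δ:ℂ) with hzdef
    have hz_near : z ∈ ball w₀ ε := by
      rw [mem_ball, Complex.dist_eq, hzdef]
      simp only [add_sub_cancel_left, cabs_ofReal, abs_of_pos hδ0]
      calc δ ≤ ε/2 := min_le_left _ _
      _ < ε := by linarith
    have hzball : z ∈ ball (0:ℂ) 1 := by
      rw [hmem, hzdef]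
      calc ‖w₀ + (δ:ℂ)‖ ≤ ‖w₀‖ + ‖(δ:ℂ)‖ := by
            exact norm_add_le _ _
      _ = ‖w₀‖ + δ := by rw [cabs_ofReal, abs_of_pos hδ0]
      _ ≤ ‖w₀‖ + (r₁ - ‖w₀‖)/2 := by
            have := min_le_right (ε/2) ((r₁ - ‖w₀‖)/2); linarith
      _ < 1 := by linarith
    have hfz : f z = 0 := hball z hz_near
    have : z = w₀ := hdisc.injOn hzball hw₀1 (by rw [hfz, hfw₀])
    rw [hzdef] at this
    have : (δ:ℂ) = 0 := by linear_combination this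
    rw [Complex.ofReal_eq_zero] at this
    linarith
  obtain ⟨n, hn⟩ : ∃ n : ℕ, analyticOrderAt f w₀ = (n : ℕ∞) := by
    obtain ⟨n, hn⟩ := WithTop.ne_top_iff_exists.mp horder_ne_top
    exact ⟨n, hn.symm⟩
  obtain ⟨g₀, hg₀an, hg₀ne, hg₀ev⟩ := hfa.analyticOrderAt_eq_natCast.mp hn
  have hn0 : n ≠ 0 := by
    intro h0
    have := hg₀ev.self_of_nhds
    rw [h0, pow_zero, one_smul, hfw₀] at this
    exact hg₀ne this.symm
  -- Step 5 : global factorization f = (z-w₀)^n * g with g nonvanishing on the closed ball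
  set g : ℂ → ℂ := fun z => if z = w₀ then g₀ w₀ else f z / (z - w₀)^n with hgdef
  have hfg : ∀ z : ℂ, f z = (z - w₀)^n * g z := by
    intro z
    by_cases h : z = w₀
    · subst h; simp [hgdef, hfw₀, zero_pow hn0]
    · simp only [hgdef, if_neg h]
      rw [mul_comm, div_mul_cancel₀ _ (pow_ne_zero _ (sub_ne_zero.mpr h))]
  have hgw₀ev : g =ᶠ[nhds w₀] g₀ := by
    filter_upwards [hg₀ev] with z hzev
    by_cases h : z = w₀
    · subst h; simp [hgdef]
    · simp only [hgdef, if_neg h]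
      rw [hzev, smul_eq_mul, mul_comm, mul_div_assoc,
        div_self (pow_ne_zero _ (sub_ne_zero.mpr h)), mul_one]
  have hg_diff : DifferentiableOn ℂ g (ball (0:ℂ) 1) := by
    intro z hz
    by_cases h : z = w₀
    · subst h
      exact (hg₀an.differentiableAt.congr_of_eventuallyEq hgw₀ev).differentiableWithinAt
    · have hfz : DifferentiableAt ℂ f z := hf.differentiableAt (isOpen_ball.mem_nhds hz)
      have hden : DifferentiableAt ℂ (fun z => (z - w₀)^n) z := by fun_prop
      have hq : DifferentiableAt ℂ (fun z => f z / (z - w₀)^n) z :=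
        hfz.div hden (pow_ne_zero _ (sub_ne_zero.mpr h))
      refine (hq.congr_of_eventuallyEq ?_).differentiableWithinAt
      filter_upwards [eventually_ne_nhds h] with x hx
      simp [hgdef, if_neg hx]
  have hg_ne : ∀ z ∈ closedBall (0:ℂ) r₁, g z ≠ 0 := by
    intro z hz
    by_cases h : z = w₀
    · subst h; simpa [hgdef] using hg₀ne
    · simp only [hgdef, if_neg h]
      refine div_ne_zero ?_ (pow_ne_zero _ (sub_ne_zero.mpr h))
      intro hf0
      exact h (hdisc.injOn (hsub1 hz) hw₀1 (by rw [hf0, hfw₀]))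
  -- Step 6 : the Blaschke quotient q
  set q : ℂ → ℂ :=
    fun z => g z * ((r₁:ℂ)^2 - (starRingEnd ℂ) w₀ * z)^n / ((r₂:ℂ) * (r₁:ℂ)^n) with hqdef
  have hconst_ne : ((r₂:ℂ) * (r₁:ℂ)^n) ≠ 0 :=
    mul_ne_zero (Complex.ofReal_ne_zero.mpr hr₂0.ne')
      (pow_ne_zero _ (Complex.ofReal_ne_zero.mpr hr₁0.ne'))
  have habs_const : ‖(r₂:ℂ) * (r₁:ℂ)^n‖ = r₂ * r₁^n := by
    rw [norm_mul, norm_pow, cabs_ofReal, cabs_ofReal,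
      abs_of_pos hr₂0, abs_of_pos hr₁0]
  have hq_diff : DifferentiableOn ℂ q (ball (0:ℂ) 1) :=
    (hg_diff.mul (Differentiable.differentiableOn (by fun_prop))).div_const _
  have hden_ne : ∀ z ∈ closedBall (0:ℂ) r₁, ((r₁:ℂ)^2 - (starRingEnd ℂ) w₀ * z) ≠ 0 := by
    intro z hz hzero
    have h1 : ‖(starRingEnd ℂ) w₀ * z‖ ≤ ‖w₀‖ * r₁ := by
      rw [norm_mul, Complex.norm_conj]
      exact mul_le_mul_of_nonneg_left ((hmemc z r₁).mp hz) (norm_nonneg _)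
    have h2 : ((r₁:ℂ)^2) = (starRingEnd ℂ) w₀ * z := by linear_combination hzero
    have h3 : ‖(r₁:ℂ)^2‖ = r₁^2 := by
      rw [norm_pow, cabs_ofReal, abs_of_pos hr₁0]
    rw [← h2, h3] at h1
    nlinarith [norm_nonneg w₀]
  have hq_ne : ∀ z ∈ closedBall (0:ℂ) r₁, q z ≠ 0 := by
    intro z hz
    exact div_ne_zero (mul_ne_zero (hg_ne z hz) (pow_ne_zero _ (hden_ne z hz))) hconst_ne
  -- |q| = 1 on the circle of radius r₁
  have hqs : ∀ z ∈ sphere (0:ℂ) r₁, ‖q z‖ = 1 := by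
    intro z hz
    have hz' : ‖z‖ = r₁ := by
      rw [← mem_sphere_zero_iff_norm]; exact hz
    have hzw : z ≠ w₀ := fun h => by rw [h] at hz'; linarith
    have hA0 : 0 < ‖z - w₀‖ := norm_pos_iff.mpr (sub_ne_zero.mpr hzw)
    have habsden : ‖(r₁:ℂ)^2 - (starRingEnd ℂ) w₀ * z‖
        = r₁ * ‖z - w₀‖ := by
      have hid := normSq_mobius r₁ w₀ z
      rw [show Complex.normSq z = r₁^2 by rw [Complex.normSq_eq_norm_sq, hz'], sub_self,
        zero_mul] at hid
      rw [Complex.norm_def, Complex.norm_def,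
        show Complex.normSq ((r₁:ℂ)^2 - (starRingEnd ℂ) w₀ * z)
          = r₁^2 * Complex.normSq (z - w₀) by linarith,
        Real.sqrt_mul (sq_nonneg r₁), Real.sqrt_sq hr₁0.le]
    have habsf : ‖f z‖ = r₂ := hcirc z hz'
    have habsg : ‖g z‖ = r₂ / ‖z - w₀‖^n := by
      have := congrArg norm (hfg z)
      rw [habsf, norm_mul, norm_pow] at this
      field_simp at this ⊢
      linarith
    rw [hqdef]
    simp only [norm_div, norm_mul, norm_pow]
    rw [habsg, habsden, cabs_ofReal, cabs_ofReal, abs_of_pos hr₂0,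
      abs_of_pos hr₁0]
    field_simp
    ring
  -- maximum modulus both ways
  have hq_cl : DiffContOnCl ℂ q (ball (0:ℂ) r₁) := by
    refine ⟨hq_diff.mono (ball_subset_ball hr₁1.le), ?_⟩
    rw [closure_ball _ hr₁0.ne']
    exact hq_diff.continuousOn.mono hsub1
  have hql : ∀ z ∈ closedBall (0:ℂ) r₁, ‖q z‖ ≤ 1 := by
    intro z hz
    have := Complex.norm_le_of_forall_mem_frontier_norm_le isBounded_ball hq_cl (C := 1)
      (fun w hw => by
        rw [frontier_ball _ hr₁0.ne'] at hw
        rw [hqs w hw])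
      (z := z) (by rw [closure_ball _ hr₁0.ne']; exact hz)
    exact this
  have hqg : ∀ z ∈ closedBall (0:ℂ) r₁, 1 ≤ ‖q z‖ := by
    have hqinv_cl : DiffContOnCl ℂ (fun z => (q z)⁻¹) (ball (0:ℂ) r₁) := by
      refine ⟨(hq_diff.mono (ball_subset_ball hr₁1.le)).inv
        (fun z hz => hq_ne z (ball_subset_closedBall hz)), ?_⟩
      rw [closure_ball _ hr₁0.ne']
      exact (hq_diff.continuousOn.mono hsub1).inv₀ hq_ne
    intro z hz
    have := Complex.norm_le_of_forall_mem_frontier_norm_le isBounded_ball hqinv_cl (C := 1)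
      (fun w hw => by
        rw [frontier_ball _ hr₁0.ne'] at hw
        rw [norm_inv, hqs w hw]; norm_num)
      (z := z) (by rw [closure_ball _ hr₁0.ne']; exact hz)
    rw [norm_inv] at this
    have h0 : 0 < ‖q z‖ := norm_pos_iff.mpr (hq_ne z hz)
    calc (1:ℝ) = (‖q z‖)⁻¹ * ‖q z‖ := (inv_mul_cancel₀ h0.ne').symm
    _ ≤ 1 * ‖q z‖ := by gcongr
    _ = ‖q z‖ := one_mul _
  have hq1 : ∀ z ∈ closedBall (0:ℂ) r₁, ‖q z‖ = 1 :=
    fun z hz => le_antisymm (hql z hz) (hqg z hz)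
  -- Step 7 : q is constant
  have h0ball : (0:ℂ) ∈ ball (0:ℂ) r₁ := mem_ball_self hr₁0
  have hmax : IsMaxOn (norm ∘ q) (ball (0:ℂ) r₁) 0 := by
    intro z hz
    simp only [Function.comp_apply, Set.mem_setOf_eq]
    rw [hq1 z (ball_subset_closedBall hz), hq1 0 (ball_subset_closedBall h0ball)]
  have hconst : EqOn q (Function.const ℂ (q 0)) (ball (0:ℂ) r₁) :=
    Complex.eqOn_of_isPreconnected_of_isMaxOn_norm (convex_ball 0 r₁).isPreconnected
      isOpen_ball (hq_diff.mono (ball_subset_ball hr₁1.le)) h0ball hmax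
  set c := q 0 with hcdef
  have hc1 : ‖c‖ = 1 := hq1 0 (mem_closedBall_self hr₁0.le)
  have hc0 : c ≠ 0 := by
    intro h; rw [h] at hc1; simp at hc1
  -- Step 8 : identity theorem, global relation
  have hrel : ∀ z ∈ ball (0:ℂ) 1,
      f z * ((r₁:ℂ)^2 - (starRingEnd ℂ) w₀ * z)^n
        = (c * ((r₂:ℂ) * (r₁:ℂ)^n)) * (z - w₀)^n := by
    set F : ℂ → ℂ := fun z => f z * ((r₁:ℂ)^2 - (starRingEnd ℂ) w₀ * z)^n
      - (c * ((r₂:ℂ) * (r₁:ℂ)^n)) * (z - w₀)^n with hFdef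
    have hF_diff : DifferentiableOn ℂ F (ball (0:ℂ) 1) :=
      (hf.mul (Differentiable.differentiableOn (by fun_prop))).sub
        (Differentiable.differentiableOn (by fun_prop))
    have hF_an : AnalyticOnNhd ℂ F (ball (0:ℂ) 1) := hF_diff.analyticOnNhd isOpen_ball
    have hF0 : EqOn F 0 (ball (0:ℂ) r₁) := by
      intro z hz
      have hqz : g z * ((r₁:ℂ)^2 - (starRingEnd ℂ) w₀ * z)^n = c * ((r₂:ℂ) * (r₁:ℂ)^n) :=
        (div_eq_iff hconst_ne).mp (hconst hz)
      simp only [hFdef, Pi.zero_apply]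
      rw [hfg z]
      linear_combination ((z - w₀)^n) * hqz
    have hFz : EqOn F 0 (ball (0:ℂ) 1) := by
      refine hF_an.eqOn_zero_of_preconnected_of_eventuallyEq_zero
        (convex_ball 0 1).isPreconnected ((hmem 0).mpr (by simp)) ?_
      exact Filter.eventuallyEq_of_mem (isOpen_ball.mem_nhds h0ball) hF0
    intro z hz
    have := hFz hz
    simp only [hFdef, Pi.zero_apply] at this
    linear_combination this
  -- Step 9 : no pole of the Möbius expression inside the disc
  have hnopole : ∀ z ∈ ball (0:ℂ) 1, ((r₁:ℂ)^2 - (starRingEnd ℂ) w₀ * z) ≠ 0 := by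
    intro z hz h0
    have h1 := hrel z hz
    rw [h0, zero_pow hn0, mul_zero] at h1
    have hc' : c * ((r₂:ℂ) * (r₁:ℂ)^n) ≠ 0 := mul_ne_zero hc0 hconst_ne
    have h2 : (z - w₀)^n = 0 := (mul_eq_zero.mp h1.symm).resolve_left hc'
    have hzw : z = w₀ := by
      have := pow_eq_zero_iff hn0 |>.mp h2
      exact sub_eq_zero.mp this
    rw [hzw] at h0
    have h3 : ((r₁:ℂ)^2) = ((Complex.normSq w₀ : ℝ) : ℂ) := by
      rw [← Complex.mul_conj]
      linear_combination h0
    have h4 : r₁^2 = Complex.normSq w₀ := by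
      exact_mod_cast h3
    have h5 : Complex.normSq w₀ = ‖w₀‖ ^ 2 := Complex.normSq_eq_norm_sq w₀
    nlinarith [norm_nonneg w₀]
  -- Step 10 : n = 1
  have hfval : ∀ (w z : ℂ), ‖z‖ < r₁ →
      (r₁:ℂ) * (z - w₀) = w * ((r₁:ℂ)^2 - (starRingEnd ℂ) w₀ * z) →
      f z = c * (r₂:ℂ) * w^n := by
    intro w z hzlt hzrel
    have hz1 : z ∈ ball (0:ℂ) 1 := (hmem z).mpr (lt_trans hzlt hr₁1)
    have hd : ((r₁:ℂ)^2 - (starRingEnd ℂ) w₀ * z) ≠ 0 := hnopole z hz1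
    have h1 := hrel z hz1
    have h2 : ((r₁:ℂ))^n * (z - w₀)^n = w^n * ((r₁:ℂ)^2 - (starRingEnd ℂ) w₀ * z)^n := by
      rw [← mul_pow, ← mul_pow, hzrel]
    have hdn : ((r₁:ℂ)^2 - (starRingEnd ℂ) w₀ * z)^n ≠ 0 := pow_ne_zero _ hd
    have hr₁C : ((r₁:ℂ))^n ≠ 0 := pow_ne_zero _ (Complex.ofReal_ne_zero.mpr hr₁0.ne')
    apply mul_right_cancel₀ (mul_ne_zero hdn hr₁C)
    calc f z * (((r₁:ℂ)^2 - (starRingEnd ℂ) w₀ * z)^n * ((r₁:ℂ))^n)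
        = (f z * ((r₁:ℂ)^2 - (starRingEnd ℂ) w₀ * z)^n) * ((r₁:ℂ))^n := by ring
    _ = ((c * ((r₂:ℂ) * (r₁:ℂ)^n)) * (z - w₀)^n) * ((r₁:ℂ))^n := by rw [h1]
    _ = (c * ((r₂:ℂ) * (r₁:ℂ)^n)) * (((r₁:ℂ))^n * (z - w₀)^n) := by ring
    _ = (c * ((r₂:ℂ) * (r₁:ℂ)^n)) * (w^n * ((r₁:ℂ)^2 - (starRingEnd ℂ) w₀ * z)^n) := by
          rw [h2]
    _ = c * (r₂:ℂ) * w^n * (((r₁:ℂ)^2 - (starRingEnd ℂ) w₀ * z)^n * ((r₁:ℂ))^n) := by ring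
  have hpoint : ∀ w : ℂ, ‖w‖ < 1 → ∃ z : ℂ, ‖z‖ < r₁ ∧
      (r₁:ℂ) * (z - w₀) = w * ((r₁:ℂ)^2 - (starRingEnd ℂ) w₀ * z) := by
    intro w hw
    set d := (r₁:ℂ) + w * (starRingEnd ℂ) w₀ with hddef
    have habsw : ‖w * (starRingEnd ℂ) w₀‖ < r₁ := by
      rw [norm_mul, Complex.norm_conj]
      calc ‖w‖ * ‖w₀‖ ≤ 1 * ‖w₀‖ := by
            apply mul_le_mul_of_nonneg_right hw.le (norm_nonneg _)
      _ = ‖w₀‖ := one_mul _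
      _ < r₁ := hw₀lt
    have hd0 : d ≠ 0 := by
      intro h
      have : (r₁:ℂ) = -(w * (starRingEnd ℂ) w₀) := by linear_combination h
      have := congrArg norm this
      rw [norm_neg, cabs_ofReal, abs_of_pos hr₁0] at this
      linarith
    set z := (w * (r₁:ℂ)^2 + (r₁:ℂ) * w₀) / d with hzdef
    have hz : z * d = w * (r₁:ℂ)^2 + (r₁:ℂ) * w₀ := div_mul_cancel₀ _ hd0
    refine ⟨z, ?_, by linear_combination hz⟩
    -- norm estimate
    have hfact : w * (r₁:ℂ)^2 + (r₁:ℂ) * w₀ = (r₁:ℂ) * (w * (r₁:ℂ) + w₀) := by ring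
    have hkey := normSq_mobius' r₁ w₀ w
    have hposrhs : 0 < (1 - Complex.normSq w) * (r₁^2 - Complex.normSq w₀) := by
      have h1 : Complex.normSq w < 1 := by
        rw [Complex.normSq_eq_norm_sq]; nlinarith [norm_nonneg w]
      have h2 : Complex.normSq w₀ < r₁^2 := by
        rw [Complex.normSq_eq_norm_sq]; nlinarith [norm_nonneg w₀]
      nlinarith
    have hnum : Complex.normSq (w * (r₁:ℂ) + w₀) < Complex.normSq d := by
      rw [hddef]; nlinarith
    have habsnum : ‖w * (r₁:ℂ) + w₀‖ < ‖d‖ := by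
      rw [Complex.norm_def, Complex.norm_def]
      exact Real.sqrt_lt_sqrt (Complex.normSq_nonneg _) hnum
    have habsd : 0 < ‖d‖ := norm_pos_iff.mpr hd0
    rw [hzdef, norm_div, hfact, norm_mul, cabs_ofReal, abs_of_pos hr₁0,
      div_lt_iff₀ habsd]
    nlinarith
  have hn1 : n = 1 := by
    by_contra hne
    have hn2 : 2 ≤ n := by omega
    have hprim := Complex.isPrimitiveRoot_exp n hn0
    set ζ := Complex.exp (2 * Real.pi * Complex.I / n) with hζdef
    have hζn : ζ ^ n = 1 := hprim.pow_eq_one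
    have hζ1 : ζ ≠ 1 := hprim.ne_one hn2
    have habsζ : ‖ζ‖ = 1 := by
      have harg : (2 * (Real.pi:ℂ) * Complex.I / (n:ℂ)) = ((2*Real.pi/n : ℝ) : ℂ) * Complex.I := by
        push_cast; ring
      rw [hζdef, harg, Complex.norm_exp_ofReal_mul_I]
    obtain ⟨z₁, hz₁lt, hz₁rel⟩ := hpoint ((1:ℂ)/2) (by norm_num)
    obtain ⟨z₂, hz₂lt, hz₂rel⟩ := hpoint (ζ/2) (by
      rw [norm_div, habsζ]; norm_num)
    have hf₁ := hfval _ _ hz₁lt hz₁rel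
    have hf₂ := hfval _ _ hz₂lt hz₂rel
    have hfeq : f z₁ = f z₂ := by
      rw [hf₁, hf₂, div_pow, div_pow, hζn, one_pow]
    have hz₁1 : z₁ ∈ ball (0:ℂ) 1 := (hmem z₁).mpr (lt_trans hz₁lt hr₁1)
    have hz₂1 : z₂ ∈ ball (0:ℂ) 1 := (hmem z₂).mpr (lt_trans hz₂lt hr₁1)
    have hzeq : z₁ = z₂ := hdisc.injOn hz₁1 hz₂1 hfeq
    rw [← hzeq] at hz₂rel
    have hDne : ((r₁:ℂ)^2 - (starRingEnd ℂ) w₀ * z₁) ≠ 0 := hnopole z₁ hz₁1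
    have : ((1:ℂ) - ζ) * ((r₁:ℂ)^2 - (starRingEnd ℂ) w₀ * z₁) = 0 := by
      linear_combination 2 * (hz₂rel - hz₁rel)
    rcases mul_eq_zero.mp this with h | h
    · apply hζ1
      have : (1:ℂ) = ζ := by linear_combination h
      exact this.symm
    · exact hDne h
  -- Step 11 : boundary modulus identity for the Möbius map
  have hrel1 : ∀ z ∈ ball (0:ℂ) 1,
      f z * ((r₁:ℂ)^2 - (starRingEnd ℂ) w₀ * z) = (c * ((r₂:ℂ) * (r₁:ℂ))) * (z - w₀) := by
    intro z hz
    have := hrel z hz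
    rw [hn1] at this
    simpa [pow_one] using this
  have hCne : (c * ((r₂:ℂ) * (r₁:ℂ))) ≠ 0 := by
    apply mul_ne_zero hc0
    apply mul_ne_zero (Complex.ofReal_ne_zero.mpr hr₂0.ne') (Complex.ofReal_ne_zero.mpr hr₁0.ne')
  have habsC : ‖c * ((r₂:ℂ) * (r₁:ℂ))‖ = r₂ * r₁ := by
    rw [norm_mul, norm_mul, hc1, cabs_ofReal, cabs_ofReal,
      abs_of_pos hr₂0, abs_of_pos hr₁0, one_mul]
  have hble : ∀ u : ℂ, ‖u‖ ≤ 1 →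
      (r₂ * r₁) * ‖u - w₀‖ ≤ ‖(r₁:ℂ)^2 - (starRingEnd ℂ) w₀ * u‖ := by
    have hsubset : closedBall (0:ℂ) 1 ⊆ {z : ℂ | (r₂*r₁) * ‖z - w₀‖
        ≤ ‖(r₁:ℂ)^2 - (starRingEnd ℂ) w₀ * z‖} := by
      rw [← closure_ball (0:ℂ) one_ne_zero]
      refine closure_minimal ?_ ?_
      · intro z hz
        have h1 := congrArg norm (hrel1 z hz)
        rw [norm_mul, norm_mul, habsC] at h1
        have h2 : ‖f z‖ < 1 := (hmem _).mp (hdisc.mapsTo hz)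
        simp only [Set.mem_setOf_eq]
        nlinarith [norm_nonneg ((r₁:ℂ)^2 - (starRingEnd ℂ) w₀ * z),
          norm_nonneg (z - w₀), norm_nonneg (f z)]
      · apply isClosed_le
        · exact continuous_const.mul (continuous_norm.comp
            (continuous_id.sub continuous_const))
        · exact continuous_norm.comp
            (continuous_const.sub (continuous_const.mul continuous_id))
    intro u hu
    exact hsubset ((hmemc u 1).mpr hu)
  have hbeq : ∀ u : ℂ, ‖u‖ = 1 → ((r₁:ℂ)^2 - (starRingEnd ℂ) w₀ * u) ≠ 0 →
      ‖(r₁:ℂ)^2 - (starRingEnd ℂ) w₀ * u‖ = (r₂ * r₁) * ‖u - w₀‖ := by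
    intro u hu hd
    refine le_antisymm ?_ (hble u hu.le)
    by_contra hlt
    push_neg at hlt
    have habsd : 0 < ‖(r₁:ℂ)^2 - (starRingEnd ℂ) w₀ * u‖ := norm_pos_iff.mpr hd
    set v := (c * ((r₂:ℂ) * (r₁:ℂ))) * (u - w₀) / ((r₁:ℂ)^2 - (starRingEnd ℂ) w₀ * u)
      with hvdef
    have hv2 : v * ((r₁:ℂ)^2 - (starRingEnd ℂ) w₀ * u)
        = (c * ((r₂:ℂ) * (r₁:ℂ))) * (u - w₀) := div_mul_cancel₀ _ hd
    have hvabs : ‖v‖ < 1 := by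
      rw [hvdef, norm_div, norm_mul, habsC, div_lt_one habsd]
      exact hlt
    obtain ⟨z, hz, hfz⟩ := hdisc.surjOn ((hmem v).mpr hvabs)
    have h1 := hrel1 z hz
    rw [hfz] at h1
    have h3 : (c * ((r₂:ℂ) * (r₁:ℂ))) * ((z - w₀) * ((r₁:ℂ)^2 - (starRingEnd ℂ) w₀ * u)
        - (u - w₀) * ((r₁:ℂ)^2 - (starRingEnd ℂ) w₀ * z)) = 0 := by
      linear_combination ((r₁:ℂ)^2 - (starRingEnd ℂ) w₀ * z) * hv2
        - ((r₁:ℂ)^2 - (starRingEnd ℂ) w₀ * u) * h1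
    have h5 : (z - w₀) * ((r₁:ℂ)^2 - (starRingEnd ℂ) w₀ * u)
        - (u - w₀) * ((r₁:ℂ)^2 - (starRingEnd ℂ) w₀ * z) = 0 := by
      rcases mul_eq_zero.mp h3 with h | h
      · exact absurd h hCne
      · exact h
    have h6 : (z - u) * ((r₁:ℂ)^2 - (starRingEnd ℂ) w₀ * w₀) = 0 := by
      linear_combination h5
    have h7 : ((r₁:ℂ)^2 - (starRingEnd ℂ) w₀ * w₀) ≠ 0 := hnopole w₀ hw₀1
    have hzu : z = u := by
      have := (mul_eq_zero.mp h6).resolve_right h7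
      exact sub_eq_zero.mp this
    rw [hzu] at hz
    have := (hmem u).mp hz
    linarith [hu]
  -- Step 12 : conclusion
  by_cases hw0 : w₀ = 0
  · -- evaluate the boundary identity at u = 1
    have h1 : ((r₁:ℂ)^2 - (starRingEnd ℂ) w₀ * 1) ≠ 0 := by
      rw [hw0]
      simpa using pow_ne_zero 2 (Complex.ofReal_ne_zero.mpr hr₁0.ne')
    have h2 := hbeq 1 (by simp) h1
    rw [hw0] at h2
    simp only [map_zero, zero_mul, sub_zero, map_one, norm_one, mul_one] at h2
    have h3 : ‖(r₁:ℂ)^2‖ = r₁^2 := by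
      rw [norm_pow, cabs_ofReal, abs_of_pos hr₁0]
    rw [h3] at h2
    have h4 : r₁ * r₁ = r₁ * r₂ := by nlinarith [h2]
    exact mul_left_cancel₀ hr₁0.ne' h4
  · exfalso
    set a := ‖w₀‖ with hadef
    have ha0 : 0 < a := norm_pos_iff.mpr hw0
    have hna : Complex.normSq w₀ = a^2 := Complex.normSq_eq_norm_sq w₀
    have hconjmul : (starRingEnd ℂ) w₀ * w₀ = ((a^2 : ℝ) : ℂ) := by
      rw [mul_comm, Complex.mul_conj, hna]
    -- first special boundary point : u₁ = (w₀/a) * I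
    set u₁ : ℂ := w₀ * ((a⁻¹ : ℝ) : ℂ) * Complex.I with hu₁def
    have hcu₁ : (starRingEnd ℂ) w₀ * u₁ = ((a:ℝ):ℂ) * Complex.I := by
      rw [hu₁def]
      have hh : (starRingEnd ℂ) w₀ * (w₀ * ((a⁻¹ : ℝ):ℂ) * Complex.I)
          = ((starRingEnd ℂ) w₀ * w₀) * ((a⁻¹ : ℝ):ℂ) * Complex.I := by ring
      rw [hh, hconjmul]
      have : ((a^2 : ℝ):ℂ) * ((a⁻¹ : ℝ):ℂ) = ((a:ℝ):ℂ) := by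
        rw [← Complex.ofReal_mul]
        congr 1
        field_simp
      rw [this]
    have habsu₁ : ‖u₁‖ = 1 := by
      rw [hu₁def, norm_mul, norm_mul, cabs_ofReal, Complex.norm_I,
        abs_of_pos (inv_pos.mpr ha0), ← hadef, mul_one]
      field_simp
    have hd₁ : ((r₁:ℂ)^2 - (starRingEnd ℂ) w₀ * u₁) ≠ 0 := by
      rw [hcu₁]
      intro h
      have := congrArg Complex.im h
      simp [← Complex.ofReal_pow] at this
      linarith
    have hE₁ := hbeq u₁ habsu₁ hd₁
    have hE₁' : Complex.normSq ((r₁:ℂ)^2 - (starRingEnd ℂ) w₀ * u₁)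
        = (r₂*r₁)^2 * Complex.normSq (u₁ - w₀) := by
      have := congrArg (fun x : ℝ => x^2) hE₁
      simpa [mul_pow, Complex.sq_norm] using this
    have hL₁ : Complex.normSq ((r₁:ℂ)^2 - (starRingEnd ℂ) w₀ * u₁) = r₁^4 + a^2 := by
      rw [hcu₁]
      simp only [← Complex.ofReal_pow, Complex.normSq_apply, Complex.sub_re, Complex.sub_im,
        Complex.mul_re, Complex.mul_im, Complex.I_re, Complex.I_im, Complex.ofReal_re,
        Complex.ofReal_im]
      ring
    have hR₁ : Complex.normSq (u₁ - w₀) = 1 + a^2 := by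
      have hfac : u₁ - w₀ = w₀ * (((a⁻¹ : ℝ):ℂ) * Complex.I - 1) := by rw [hu₁def]; ring
      rw [hfac, Complex.normSq_mul, hna]
      simp only [Complex.normSq_apply, Complex.sub_re, Complex.sub_im, Complex.mul_re,
        Complex.mul_im, Complex.I_re, Complex.I_im, Complex.ofReal_re, Complex.ofReal_im,
        Complex.one_re, Complex.one_im]
      field_simp
      ring
    -- second special boundary point : u₂ = -(w₀/a)
    set u₂ : ℂ := -(w₀ * ((a⁻¹ : ℝ) : ℂ)) with hu₂def
    have hcu₂ : (starRingEnd ℂ) w₀ * u₂ = -((a:ℝ):ℂ) := by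
      rw [hu₂def]
      have hh : (starRingEnd ℂ) w₀ * (-(w₀ * ((a⁻¹ : ℝ):ℂ)))
          = -(((starRingEnd ℂ) w₀ * w₀) * ((a⁻¹ : ℝ):ℂ)) := by ring
      rw [hh, hconjmul]
      have : ((a^2 : ℝ):ℂ) * ((a⁻¹ : ℝ):ℂ) = ((a:ℝ):ℂ) := by
        rw [← Complex.ofReal_mul]
        congr 1
        field_simp
      rw [this]
    have habsu₂ : ‖u₂‖ = 1 := by
      rw [hu₂def, norm_neg, norm_mul, cabs_ofReal,
        abs_of_pos (inv_pos.mpr ha0), ← hadef]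
      field_simp
    have hd₂ : ((r₁:ℂ)^2 - (starRingEnd ℂ) w₀ * u₂) ≠ 0 := by
      rw [hcu₂, sub_neg_eq_add]
      have : ((r₁:ℂ)^2 + ((a:ℝ):ℂ)) = ((r₁^2 + a : ℝ) : ℂ) := by push_cast; ring
      rw [this]
      exact Complex.ofReal_ne_zero.mpr (by nlinarith)
    have hE₂ := hbeq u₂ habsu₂ hd₂
    have hE₂' : Complex.normSq ((r₁:ℂ)^2 - (starRingEnd ℂ) w₀ * u₂)
        = (r₂*r₁)^2 * Complex.normSq (u₂ - w₀) := by
      have := congrArg (fun x : ℝ => x^2) hE₂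
      simpa [mul_pow, Complex.sq_norm] using this
    have hL₂ : Complex.normSq ((r₁:ℂ)^2 - (starRingEnd ℂ) w₀ * u₂) = (r₁^2 + a)^2 := by
      rw [hcu₂]
      simp only [← Complex.ofReal_pow, Complex.normSq_apply, Complex.sub_re, Complex.sub_im,
        Complex.neg_re, Complex.neg_im, Complex.ofReal_re, Complex.ofReal_im]
      ring
    have hR₂ : Complex.normSq (u₂ - w₀) = (1 + a)^2 := by
      have hfac : u₂ - w₀ = w₀ * (-((a⁻¹ : ℝ):ℂ) - 1) := by rw [hu₂def]; ring
      rw [hfac, Complex.normSq_mul, hna]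
      simp only [Complex.normSq_apply, Complex.sub_re, Complex.sub_im, Complex.neg_re,
        Complex.neg_im, Complex.ofReal_re, Complex.ofReal_im, Complex.one_re, Complex.one_im]
      field_simp
      ring
    rw [hL₁, hR₁] at hE₁'
    rw [hL₂, hR₂] at hE₂'
    -- subtract the two identities
    have hkey : 2*a*r₁^2 = (r₂*r₁)^2 * (2*a) := by linear_combination hE₂' - hE₁'
    have hkey2 : r₁^2 = (r₂*r₁)^2 := by
      have h2a : (2*a) ≠ 0 := by positivity
      apply mul_right_cancel₀ h2a
      linear_combination hkey
    have hr₂sq : r₂^2 < 1 := by nlinarith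
    have hlt : (r₂*r₁)^2 < r₁^2 := by nlinarith [mul_pos hr₁0 hr₁0]
    linarith [hkey2, hlt]
end
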